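/- arXiv:2303.02607 — 4 statements merged into one kernel-verified Lean document; each statement's English description precedes it below -/
import Mathlib

section
/- Let n ≥ 1, let λ₁,…,λₙ be strictly positive real numbers and b₁,…,bₙ real numbers. Define c₀ = exp(−(1/2)·Σᵢ bᵢ²) · Πᵢ (2λᵢ)^{−1/2}, dₖ = (1/2)·Σᵢ (1 − k·bᵢ²)(2λᵢ)^{−k} for k ≥ 1, and cₖ = (1/k)·Σ_{i=0}^{k−1} d_{k−i} cᵢ for k ≥ 1. Then for every q ≥ 0 the infinite series Σ_{k=0}^{∞} (−1)ᵏ cₖ · q^{n/2+k} / Γ(n/2 + k + 1) converges, where Γ is the Gamma function. -/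
open Filter

set_option maxHeartbeats 2000000 in
/-- Convergence of the series `∑ₖ (-1)ᵏ cₖ q^{n/2+k} / Γ(n/2+k+1)` for the coefficients
defined by the recursion from positive `λᵢ` and real `bᵢ`. -/
theorem series_converges {n : ℕ} (hn : 1 ≤ n)
    (lam : Fin n → ℝ) (hlam : ∀ i, 0 < lam i) (b : Fin n → ℝ)
    (c d : ℕ → ℝ)
    (hc0 : c 0 = Real.exp (-(1 / 2) * ∑ i, (b i) ^ 2) * ∏ i, (2 * lam i) ^ (-(1 : ℝ) / 2))
    (hd : ∀ k : ℕ, 1 ≤ k →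
      d k = (1 / 2) * ∑ i, (1 - (k : ℝ) * (b i) ^ 2) * (2 * lam i) ^ (-(k : ℝ)))
    (hck : ∀ k : ℕ, 1 ≤ k →
      c k = (1 / (k : ℝ)) * ∑ i ∈ Finset.range k, d (k - i) * c i)
    (q : ℝ) (hq : 0 ≤ q) :
    ∃ L : ℝ, Tendsto
      (fun N => ∑ k ∈ Finset.range N,
        (-1 : ℝ) ^ k * c k * q ^ ((n : ℝ) / 2 + k) / Real.Gamma ((n : ℝ) / 2 + k + 1))
      atTop (nhds L) := by
  -- Trivial case q = 0
  rcases eq_or_lt_of_le hq with hq0 | hq0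
  · refine ⟨0, ?_⟩
    have hz : ∀ k : ℕ, (-1 : ℝ) ^ k * c k * q ^ ((n : ℝ) / 2 + k)
        / Real.Gamma ((n : ℝ) / 2 + k + 1) = 0 := by
      intro k
      have hn1 : (1 : ℝ) ≤ (n : ℝ) := by exact_mod_cast hn
      have hpos : (0 : ℝ) < (n : ℝ) / 2 + k := by
        have : (0 : ℝ) ≤ (k : ℝ) := Nat.cast_nonneg k
        linarith
      rw [← hq0, Real.zero_rpow (ne_of_gt hpos)]
      ring
    have heq : (fun N => ∑ k ∈ Finset.range N,
        (-1 : ℝ) ^ k * c k * q ^ ((n : ℝ) / 2 + k) / Real.Gamma ((n : ℝ) / 2 + k + 1))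
        = fun _ => (0 : ℝ) := by
      funext N; exact Finset.sum_eq_zero fun k _ => hz k
    rw [heq]; exact tendsto_const_nhds
  -- Main case q > 0
  have hn1 : (1 : ℝ) ≤ (n : ℝ) := by exact_mod_cast hn
  obtain ⟨B, hB⟩ : ∃ x : ℝ, x = ∑ i, (b i) ^ 2 := ⟨_, rfl⟩
  have hB0 : 0 ≤ B := by rw [hB]; exact Finset.sum_nonneg fun i _ => sq_nonneg _
  obtain ⟨R, hR⟩ : ∃ x : ℝ, x = 1 + ∑ i, (2 * lam i)⁻¹ := ⟨_, rfl⟩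
  have hlam2 : ∀ i, (0 : ℝ) < 2 * lam i := fun i => by have := hlam i; linarith
  have hR1 : (1 : ℝ) ≤ R := by
    have : 0 ≤ ∑ i, (2 * lam i)⁻¹ :=
      Finset.sum_nonneg fun i _ => le_of_lt (inv_pos.mpr (hlam2 i))
    simp only [hR]; linarith
  have hRnn : (0 : ℝ) ≤ R := by linarith
  have hRi : ∀ i, (2 * lam i)⁻¹ ≤ R := by
    intro i
    have h1 : (2 * lam i)⁻¹ ≤ ∑ j, (2 * lam j)⁻¹ :=
      Finset.single_le_sum (fun j _ => le_of_lt (inv_pos.mpr (hlam2 j)))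
        (Finset.mem_univ i)
    simp only [hR]; linarith
  obtain ⟨R', hR'⟩ : ∃ x : ℝ, x = 2 * R := ⟨_, rfl⟩
  have hR'1 : (1 : ℝ) ≤ R' := by simp only [hR']; linarith
  have hR'0 : (0 : ℝ) < R' := lt_of_lt_of_le one_pos hR'1
  have hR'nn : (0 : ℝ) ≤ R' := le_of_lt hR'0
  obtain ⟨C, hC⟩ : ∃ x : ℝ, x = ((n : ℝ) + B) / 2 := ⟨_, rfl⟩
  have hC0 : (0 : ℝ) < C := by simp only [hC]; linarith
  have hCnn : (0 : ℝ) ≤ C := le_of_lt hC0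
  -- bound on d
  have hdbd : ∀ k : ℕ, 1 ≤ k → |d k| ≤ C * R' ^ k := by
    intro k hk
    rw [hd k hk]
    have hknn : (0 : ℝ) ≤ (k : ℝ) := Nat.cast_nonneg k
    have hRk : (0 : ℝ) ≤ R ^ k := pow_nonneg hRnn k
    have hterm : ∀ i : Fin n, |(1 - (k : ℝ) * (b i) ^ 2) * (2 * lam i) ^ (-(k : ℝ))|
        ≤ (1 + (k : ℝ)) * (1 + (b i) ^ 2) * R ^ k := by
      intro i
      rw [abs_mul]
      have h1 : |1 - (k : ℝ) * (b i) ^ 2| ≤ 1 + (k : ℝ) * (b i) ^ 2 := by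
        rw [abs_sub_comm, abs_le]
        constructor <;> nlinarith [sq_nonneg (b i)]
      have h2 : |(2 * lam i) ^ (-(k : ℝ))| ≤ R ^ k := by
        rw [abs_of_nonneg (Real.rpow_nonneg (le_of_lt (hlam2 i)) _)]
        rw [Real.rpow_neg (le_of_lt (hlam2 i)), Real.rpow_natCast, ← inv_pow]
        exact pow_le_pow_left₀ (le_of_lt (inv_pos.mpr (hlam2 i))) (hRi i) k
      calc |1 - (k : ℝ) * (b i) ^ 2| * |(2 * lam i) ^ (-(k : ℝ))|
          ≤ (1 + (k : ℝ) * (b i) ^ 2) * R ^ k := by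
            apply mul_le_mul h1 h2 (abs_nonneg _)
            nlinarith [sq_nonneg (b i)]
        _ ≤ (1 + (k : ℝ)) * (1 + (b i) ^ 2) * R ^ k := by
            have h3 : 1 + (k : ℝ) * (b i) ^ 2 ≤ (1 + (k : ℝ)) * (1 + (b i) ^ 2) := by
              nlinarith [sq_nonneg (b i)]
            nlinarith
    have hsum : |∑ i, (1 - (k : ℝ) * (b i) ^ 2) * (2 * lam i) ^ (-(k : ℝ))|
        ≤ (1 + (k : ℝ)) * ((n : ℝ) + B) * R ^ k := by
      calc |∑ i, (1 - (k : ℝ) * (b i) ^ 2) * (2 * lam i) ^ (-(k : ℝ))|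
          ≤ ∑ i, |(1 - (k : ℝ) * (b i) ^ 2) * (2 * lam i) ^ (-(k : ℝ))| :=
            Finset.abs_sum_le_sum_abs _ _
        _ ≤ ∑ i : Fin n, (1 + (k : ℝ)) * (1 + (b i) ^ 2) * R ^ k :=
            Finset.sum_le_sum fun i _ => hterm i
        _ = (1 + (k : ℝ)) * ((n : ℝ) + B) * R ^ k := by
            rw [← Finset.sum_mul, ← Finset.mul_sum]
            congr 2
            rw [Finset.sum_add_distrib]
            simp [hB]
    have h2k : (1 + (k : ℝ)) ≤ 2 ^ k := by
      have h := Nat.lt_two_pow_self (n := k)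
      have : (k : ℝ) + 1 ≤ (2 : ℝ) ^ k := by exact_mod_cast Nat.succ_le_of_lt h
      linarith
    have h2knn : (0 : ℝ) ≤ (2 : ℝ) ^ k := by positivity
    have hnB : (0 : ℝ) ≤ (n : ℝ) + B := by linarith
    calc |1 / 2 * ∑ i, (1 - (k : ℝ) * (b i) ^ 2) * (2 * lam i) ^ (-(k : ℝ))|
        ≤ 1 / 2 * ((1 + (k : ℝ)) * ((n : ℝ) + B) * R ^ k) := by
          rw [abs_mul]
          have habs : |(1 : ℝ) / 2| = 1 / 2 := by norm_num
          rw [habs]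
          linarith [mul_le_mul_of_nonneg_left hsum (by norm_num : (0:ℝ) ≤ 1/2)]
      _ ≤ C * R' ^ k := by
          simp only [hC, hR']
          rw [mul_pow]
          have h4 := mul_le_mul_of_nonneg_left
            (mul_le_mul_of_nonneg_right h2k hRk) hnB
          linarith
  -- bound on c
  obtain ⟨K, hK⟩ : ∃ x : ℝ, x = |c 0| + 1 := ⟨_, rfl⟩
  have hK0 : (0 : ℝ) < K := by
    have := abs_nonneg (c 0); simp only [hK]; linarith
  have hKnn : (0 : ℝ) ≤ K := le_of_lt hK0
  obtain ⟨S, hS⟩ : ∃ x : ℝ, x = 2 * R' * (C + 1) := ⟨_, rfl⟩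
  have hS2R' : 2 * R' ≤ S := by simp only [hS]; nlinarith
  have hS2CR' : 2 * C * R' ≤ S := by simp only [hS]; nlinarith
  have hS0 : (0 : ℝ) < S := by simp only [hS]; nlinarith
  have hSnn : (0 : ℝ) ≤ S := le_of_lt hS0
  have key : ∀ k : ℕ, |c k| ≤ K * S ^ k := by
    intro k
    induction k using Nat.strong_induction_on with
    | _ k ih =>
      match k, ih with
      | 0, _ => simp only [pow_zero, mul_one, hK]; linarith [abs_nonneg (c 0)]
      | m + 1, ih =>
        have hk1 : 1 ≤ m + 1 := Nat.succ_le_succ (Nat.zero_le m)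
        rw [hck (m + 1) hk1, abs_mul]
        have hkpos : (0 : ℝ) < ((m + 1 : ℕ) : ℝ) := by
          exact_mod_cast Nat.succ_pos m
        have hinv : |1 / ((m + 1 : ℕ) : ℝ)| ≤ 1 := by
          rw [abs_of_nonneg (le_of_lt (div_pos one_pos hkpos))]
          rw [div_le_one hkpos]
          exact_mod_cast hk1
        have hSm : (0 : ℝ) ≤ S ^ m := pow_nonneg hSnn m
        have hsum : |∑ i ∈ Finset.range (m + 1), d (m + 1 - i) * c i|
            ≤ C * K * R' * S ^ m * 2 := by
          calc |∑ i ∈ Finset.range (m + 1), d (m + 1 - i) * c i|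
              ≤ ∑ i ∈ Finset.range (m + 1), |d (m + 1 - i) * c i| :=
                Finset.abs_sum_le_sum_abs _ _
            _ ≤ ∑ i ∈ Finset.range (m + 1),
                  C * K * R' * S ^ m * (1 / 2 : ℝ) ^ (m - i) := by
                apply Finset.sum_le_sum
                intro i hi
                have him : i ≤ m := Nat.lt_succ_iff.mp (Finset.mem_range.mp hi)
                rw [abs_mul]
                have hd1 : |d (m + 1 - i)| ≤ C * R' ^ (m + 1 - i) :=
                  hdbd _ (by omega)
                have hc1 : |c i| ≤ K * S ^ i := ih i (Finset.mem_range.mp hi)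
                have hki : m + 1 - i = (m - i) + 1 := by omega
                have hRS : R' ≤ S / 2 := by linarith
                have hpow : R' ^ (m + 1 - i) ≤ R' * (S / 2) ^ (m - i) := by
                  rw [hki, pow_succ, mul_comm]
                  apply mul_le_mul_of_nonneg_left _ hR'nn
                  exact pow_le_pow_left₀ hR'nn hRS _
                have hSS : S ^ (m - i) * S ^ i = S ^ m := by
                  rw [← pow_add]; congr 1; omega
                calc |d (m + 1 - i)| * |c i|
                    ≤ (C * R' ^ (m + 1 - i)) * (K * S ^ i) := by
                      apply mul_le_mul hd1 hc1 (abs_nonneg _)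
                      exact mul_nonneg hCnn (pow_nonneg hR'nn _)
                  _ ≤ (C * (R' * (S / 2) ^ (m - i))) * (K * S ^ i) := by
                      apply mul_le_mul_of_nonneg_right _
                        (mul_nonneg hKnn (pow_nonneg hSnn i))
                      exact mul_le_mul_of_nonneg_left hpow hCnn
                  _ = C * K * R' * (S ^ (m - i) * S ^ i) * (1 / 2 : ℝ) ^ (m - i) := by
                      rw [show (S / 2 : ℝ) = S * (1 / 2) by ring, mul_pow]
                      ring
                  _ = C * K * R' * S ^ m * (1 / 2 : ℝ) ^ (m - i) := by rw [hSS]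
            _ = C * K * R' * S ^ m *
                  ∑ i ∈ Finset.range (m + 1), (1 / 2 : ℝ) ^ (m - i) := by
                rw [Finset.mul_sum]
            _ ≤ C * K * R' * S ^ m * 2 := by
                apply mul_le_mul_of_nonneg_left _
                  (mul_nonneg (mul_nonneg (mul_nonneg hCnn hKnn) hR'nn) hSm)
                have hre : ∑ i ∈ Finset.range (m + 1), (1 / 2 : ℝ) ^ (m - i)
                    = ∑ j ∈ Finset.range (m + 1), (1 / 2 : ℝ) ^ j := by
                  rw [← Finset.sum_range_reflect (fun j => (1 / 2 : ℝ) ^ j) (m + 1)]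
                  apply Finset.sum_congr rfl
                  intro i hi
                  have h1 : m + 1 - 1 - i = m - i := by omega
                  rw [h1]
                rw [hre]
                exact sum_geometric_two_le _
        calc |1 / ((m + 1 : ℕ) : ℝ)| * |∑ i ∈ Finset.range (m + 1), d (m + 1 - i) * c i|
            ≤ 1 * (C * K * R' * S ^ m * 2) := by
              apply mul_le_mul hinv hsum (abs_nonneg _) (by norm_num)
          _ ≤ K * S ^ (m + 1) := by
              rw [pow_succ, one_mul]
              nlinarith [mul_le_mul_of_nonneg_right hS2CR' hSm]
  -- Gamma lower bound
  obtain ⟨g0, hg0⟩ : ∃ x : ℝ, x = Real.Gamma ((n : ℝ) / 2 + 1) := ⟨_, rfl⟩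
  have hn2 : (0 : ℝ) < (n : ℝ) / 2 := by linarith
  have hg0pos : 0 < g0 := by rw [hg0]; exact Real.Gamma_pos_of_pos (by linarith)
  have hGam : ∀ k : ℕ, (k.factorial : ℝ) * g0 ≤ Real.Gamma ((n : ℝ) / 2 + k + 1) := by
    intro k
    induction k with
    | zero => simp [hg0]
    | succ m ihm =>
      have hmnn : (0 : ℝ) ≤ (m : ℝ) := Nat.cast_nonneg m
      have hx : ((n : ℝ) / 2 + m + 1) ≠ 0 := by linarith
      have hrw : (n : ℝ) / 2 + ((m + 1 : ℕ) : ℝ) + 1 = ((n : ℝ) / 2 + m + 1) + 1 := by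
        push_cast; ring
      rw [hrw, Real.Gamma_add_one hx]
      have hmle : ((m : ℝ) + 1) ≤ (n : ℝ) / 2 + m + 1 := by linarith
      have hGpos : 0 < Real.Gamma ((n : ℝ) / 2 + m + 1) :=
        Real.Gamma_pos_of_pos (by linarith)
      calc ((m + 1).factorial : ℝ) * g0 = ((m : ℝ) + 1) * ((m.factorial : ℝ) * g0) := by
            rw [Nat.factorial_succ]; push_cast; ring
        _ ≤ ((m : ℝ) + 1) * Real.Gamma ((n : ℝ) / 2 + m + 1) :=
            mul_le_mul_of_nonneg_left ihm (by linarith)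
        _ ≤ ((n : ℝ) / 2 + m + 1) * Real.Gamma ((n : ℝ) / 2 + m + 1) :=
            mul_le_mul_of_nonneg_right hmle (le_of_lt hGpos)
  -- Summability
  set f : ℕ → ℝ := fun k =>
    (-1 : ℝ) ^ k * c k * q ^ ((n : ℝ) / 2 + k) / Real.Gamma ((n : ℝ) / 2 + k + 1) with hf
  have hbound : ∀ k : ℕ, |f k| ≤
      (K * q ^ ((n : ℝ) / 2) / g0) * ((S * q) ^ k / (k.factorial : ℝ)) := by
    intro k
    have hknn : (0 : ℝ) ≤ (k : ℝ) := Nat.cast_nonneg k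
    have hGpos : 0 < Real.Gamma ((n : ℝ) / 2 + k + 1) :=
      Real.Gamma_pos_of_pos (by linarith)
    have hqr : q ^ ((n : ℝ) / 2 + k) = q ^ ((n : ℝ) / 2) * q ^ k := by
      rw [Real.rpow_add hq0, Real.rpow_natCast]
    simp only [hf]
    rw [abs_div, abs_of_pos hGpos, abs_mul, abs_mul, abs_pow, abs_neg, abs_one,
      one_pow, one_mul]
    have habs_q : |q ^ ((n : ℝ) / 2 + (k : ℝ))| = q ^ ((n : ℝ) / 2) * q ^ k := by
      rw [abs_of_nonneg (Real.rpow_nonneg hq _), hqr]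
    rw [habs_q]
    have hfacpos : (0 : ℝ) < (k.factorial : ℝ) :=
      by exact_mod_cast k.factorial_pos
    have hfg : (0 : ℝ) < (k.factorial : ℝ) * g0 := mul_pos hfacpos hg0pos
    have hqnn : (0 : ℝ) ≤ q ^ ((n : ℝ) / 2) * q ^ k :=
      mul_nonneg (Real.rpow_nonneg hq _) (pow_nonneg hq k)
    have hnum : |c k| * (q ^ ((n : ℝ) / 2) * q ^ k)
        ≤ K * S ^ k * (q ^ ((n : ℝ) / 2) * q ^ k) :=
      mul_le_mul_of_nonneg_right (key k) hqnn
    calc |c k| * (q ^ ((n : ℝ) / 2) * q ^ k) / Real.Gamma ((n : ℝ) / 2 + k + 1)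
        ≤ K * S ^ k * (q ^ ((n : ℝ) / 2) * q ^ k) / ((k.factorial : ℝ) * g0) := by
          apply div_le_div₀
            (mul_nonneg (mul_nonneg hKnn (pow_nonneg hSnn k)) hqnn)
            hnum hfg (hGam k)
      _ = (K * q ^ ((n : ℝ) / 2) / g0) * ((S * q) ^ k / (k.factorial : ℝ)) := by
          rw [mul_pow]
          field_simp
  have hsummg : Summable (fun k : ℕ =>
      (K * q ^ ((n : ℝ) / 2) / g0) * ((S * q) ^ k / (k.factorial : ℝ))) :=
    (Real.summable_pow_div_factorial (S * q)).mul_left _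
  have hsumabs : Summable fun k => |f k| :=
    Summable.of_nonneg_of_le (fun k => abs_nonneg _) hbound hsummg
  have hsumf : Summable f := hsumabs.of_abs
  exact ⟨∑' k, f k, hsumf.hasSum.tendsto_sum_nat⟩
end

section
/- Let n ≥ 1, let Q_x and Q_o be symmetric positive definite n×n real matrices, and let α > 0. Define Q_c = (1 + α)·Q_x + (1 + 1/α)·Q_o. Then Q_c is symmetric positive definite, and for all x, y ∈ ℝⁿ with xᵀ Q_x^{−1} x ≤ 1 and yᵀ Q_o^{−1} y ≤ 1, one has (x + y)ᵀ Q_c^{−1} (x + y) ≤ 1. In other words, the Minkowski sum of the ellipsoids {x : xᵀ Q_x^{−1} x ≤ 1} and {y : yᵀ Q_o^{−1} y ≤ 1} is contained in the ellipsoid {z : zᵀ Q_c^{−1} z ≤ 1}. -/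
open Matrix

lemma posdef_smul' {n : ℕ} {A : Matrix (Fin n) (Fin n) ℝ} (hA : A.PosDef)
    {c : ℝ} (hc : 0 < c) : (c • A).PosDef := by
  refine Matrix.PosDef.of_dotProduct_mulVec_pos ?_ fun x hx => ?_
  · unfold Matrix.IsHermitian
    rw [conjTranspose_smul, hA.1]
    simp
  · rw [smul_mulVec, dotProduct_smul, smul_eq_mul]
    exact mul_pos hc (by simpa using hA.dotProduct_mulVec_pos hx)

lemma sym_dot {n : ℕ} {A : Matrix (Fin n) (Fin n) ℝ} (hA : A.IsHermitian)
    (a b : Fin n → ℝ) : a ⬝ᵥ (A *ᵥ b) = (A *ᵥ a) ⬝ᵥ b := by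
  rw [dotProduct_mulVec, ← mulVec_transpose]
  congr 1
  have : Aᵀ = A := by simpa using congrArg id hA
  rw [this]

/-- Key inequality: `2 (u ⬝ w) ≤ u A⁻¹ u + w A w` for a positive definite `A`. -/
lemma key_ineq {n : ℕ} {A : Matrix (Fin n) (Fin n) ℝ} (hA : A.PosDef)
    (u w : Fin n → ℝ) :
    2 * (u ⬝ᵥ w) ≤ u ⬝ᵥ (A⁻¹ *ᵥ u) + w ⬝ᵥ (A *ᵥ w) := by
  have hdet : IsUnit A.det := hA.det_pos.ne'.isUnit
  have hAi : A * A⁻¹ = 1 := mul_nonsing_inv A hdet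
  set v : Fin n → ℝ := A⁻¹ *ᵥ u - w with hv
  have h0 : 0 ≤ v ⬝ᵥ (A *ᵥ v) := by simpa using hA.posSemidef.dotProduct_mulVec_nonneg v
  have hAu : A *ᵥ (A⁻¹ *ᵥ u) = u := by rw [mulVec_mulVec, hAi]; simp
  have h1 : (A⁻¹ *ᵥ u) ⬝ᵥ u = u ⬝ᵥ (A⁻¹ *ᵥ u) := dotProduct_comm _ _
  have h2 : (A⁻¹ *ᵥ u) ⬝ᵥ (A *ᵥ w) = u ⬝ᵥ w := by
    rw [sym_dot hA.1 _ w, hAu]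
  have h3 : w ⬝ᵥ u = u ⬝ᵥ w := dotProduct_comm _ _
  have hexp : v ⬝ᵥ (A *ᵥ v) = u ⬝ᵥ (A⁻¹ *ᵥ u) - 2 * (u ⬝ᵥ w) + w ⬝ᵥ (A *ᵥ w) := by
    rw [hv, mulVec_sub, hAu, sub_dotProduct, dotProduct_sub, dotProduct_sub, h1, h2, h3]
    ring
  linarith [hexp ▸ h0]

/-- The outer ellipsoid `Q_c = (1+α) Q_x + (1+1/α) Q_o` is positive definite and contains the
Minkowski sum of the ellipsoids of `Q_x` and `Q_o`. -/
theorem minkowski_sum_outer_ellipsoid {n : ℕ} (hn : 1 ≤ n)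
    (Qx Qo : Matrix (Fin n) (Fin n) ℝ) (hQx : Qx.PosDef) (hQo : Qo.PosDef)
    (α : ℝ) (hα : 0 < α)
    (Qc : Matrix (Fin n) (Fin n) ℝ) (hQc : Qc = (1 + α) • Qx + (1 + 1 / α) • Qo) :
    Qc.PosDef ∧
      ∀ x y : Fin n → ℝ, x ⬝ᵥ (Qx⁻¹ *ᵥ x) ≤ 1 → y ⬝ᵥ (Qo⁻¹ *ᵥ y) ≤ 1 →
        (x + y) ⬝ᵥ (Qc⁻¹ *ᵥ (x + y)) ≤ 1 := by
  have hα1 : 0 < 1 + α := by linarith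
  have hα2 : 0 < 1 + 1 / α := by positivity
  have hQcPD : Qc.PosDef := by
    rw [hQc]; exact (posdef_smul' hQx hα1).add (posdef_smul' hQo hα2)
  refine ⟨hQcPD, fun x y hx hy => ?_⟩
  set w : Fin n → ℝ := Qc⁻¹ *ᵥ (x + y) with hw
  set S : ℝ := (x + y) ⬝ᵥ (Qc⁻¹ *ᵥ (x + y)) with hS
  have hdet : IsUnit Qc.det := hQcPD.det_pos.ne'.isUnit
  have hQcw : Qc *ᵥ w = x + y := by
    rw [hw, mulVec_mulVec, mul_nonsing_inv Qc hdet]; simp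
  have hwQcw : w ⬝ᵥ (Qc *ᵥ w) = S := by rw [hQcw, dotProduct_comm]
  haveI : Invertible (1 + α) := invertibleOfNonzero hα1.ne'
  haveI : Invertible (1 + 1 / α) := invertibleOfNonzero hα2.ne'
  have k1 := key_ineq (posdef_smul' hQx hα1) x w
  have k2 := key_ineq (posdef_smul' hQo hα2) y w
  rw [Matrix.inv_smul (A := Qx) (1 + α) hQx.det_pos.ne'.isUnit] at k1
  rw [Matrix.inv_smul (A := Qo) (1 + 1/α) hQo.det_pos.ne'.isUnit] at k2
  have hiX : x ⬝ᵥ ((⅟(1 + α) • Qx⁻¹) *ᵥ x) = (1 + α)⁻¹ * (x ⬝ᵥ (Qx⁻¹ *ᵥ x)) := by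
    rw [smul_mulVec, dotProduct_smul, smul_eq_mul, invOf_eq_inv (1 + α)]
  have hiY : y ⬝ᵥ ((⅟(1 + 1/α) • Qo⁻¹) *ᵥ y) = (1 + 1/α)⁻¹ * (y ⬝ᵥ (Qo⁻¹ *ᵥ y)) := by
    rw [smul_mulVec, dotProduct_smul, smul_eq_mul, invOf_eq_inv (1 + 1/α)]
  have hWx : w ⬝ᵥ (((1 + α) • Qx) *ᵥ w) = (1 + α) * (w ⬝ᵥ (Qx *ᵥ w)) := by
    rw [smul_mulVec, dotProduct_smul, smul_eq_mul]
  have hWo : w ⬝ᵥ (((1 + 1/α) • Qo) *ᵥ w) = (1 + 1/α) * (w ⬝ᵥ (Qo *ᵥ w)) := by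
    rw [smul_mulVec, dotProduct_smul, smul_eq_mul]
  rw [hiX, hWx] at k1
  rw [hiY, hWo] at k2
  have hsum : (1 + α) * (w ⬝ᵥ (Qx *ᵥ w)) + (1 + 1/α) * (w ⬝ᵥ (Qo *ᵥ w)) = S := by
    rw [← hwQcw, hQc, add_mulVec, dotProduct_add, smul_mulVec, smul_mulVec,
      dotProduct_smul, dotProduct_smul, smul_eq_mul, smul_eq_mul]
  have hxyw : x ⬝ᵥ w + y ⬝ᵥ w = S := by rw [hS, ← add_dotProduct]
  have ht : (0:ℝ) < (1 + α)⁻¹ := by positivity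
  have hs : (0:ℝ) < (1 + 1/α)⁻¹ := by positivity
  have htX : (1 + α)⁻¹ * (x ⬝ᵥ (Qx⁻¹ *ᵥ x)) ≤ (1 + α)⁻¹ := by
    nlinarith
  have hsY : (1 + 1/α)⁻¹ * (y ⬝ᵥ (Qo⁻¹ *ᵥ y)) ≤ (1 + 1/α)⁻¹ := by
    nlinarith
  have hsum1 : (1 + α)⁻¹ + (1 + 1/α)⁻¹ = 1 := by
    field_simp
    ring
  linarith
end

section
/- Let n ≥ 1, let Q_x and Q_o be symmetric positive definite n×n real matrices, set α = tr(Q_o)/tr(Q_x) and Q_c = (1 + α)·Q_x + (1 + 1/α)·Q_o. Let μ be the multivariate Gaussian measure N(m, Σ) on ℝⁿ for some m ∈ ℝⁿ and symmetric positive definite Σ. Then the probability under μ that a point lies in the Minkowski sum of the ellipsoids {x : xᵀ Q_x^{−1} x ≤ 1} and {y : yᵀ Q_o^{−1} y ≤ 1} is at most the probability under μ of the set {z : zᵀ Q_c^{−1} z ≤ 1}. -/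
open MeasureTheory Matrix Real Pointwise

/-- Density of the multivariate Gaussian `N(m, S)` on `ℝⁿ`. -/
noncomputable def gaussianPdf {n : ℕ} (m : Fin n → ℝ) (S : Matrix (Fin n) (Fin n) ℝ)
    (x : Fin n → ℝ) : ℝ :=
  (2 * π) ^ (-(n : ℝ) / 2) * S.det ^ (-(1 : ℝ) / 2) *
    Real.exp (-(1 / 2) * ((x - m) ⬝ᵥ (S⁻¹ *ᵥ (x - m))))

/-- The multivariate Gaussian measure `N(m, S)` on `ℝⁿ`. -/
noncomputable def gaussianMeasure {n : ℕ} (m : Fin n → ℝ) (S : Matrix (Fin n) (Fin n) ℝ) :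
    Measure (Fin n → ℝ) :=
  volume.withDensity fun x => ENNReal.ofReal (gaussianPdf m S x)

section Aux

variable {n : ℕ}

lemma aux_dot_symm (M : Matrix (Fin n) (Fin n) ℝ) (hM : M.IsHermitian) (u v : Fin n → ℝ) :
    u ⬝ᵥ (M *ᵥ v) = v ⬝ᵥ (M *ᵥ u) := by
  rw [dotProduct_mulVec, ← mulVec_transpose, show Mᵀ = M from hM]
  exact dotProduct_comm _ _

lemma aux_dot_nonneg {M : Matrix (Fin n) (Fin n) ℝ} (hM : M.PosDef) (x : Fin n → ℝ) :
    0 ≤ x ⬝ᵥ (M *ᵥ x) := by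
  simpa using hM.posSemidef.dotProduct_mulVec_nonneg x

lemma aux_inv_mulVec {M : Matrix (Fin n) (Fin n) ℝ} (hM : M.PosDef) (v : Fin n → ℝ) :
    M⁻¹ *ᵥ (M *ᵥ v) = v := by
  rw [mulVec_mulVec, Matrix.nonsing_inv_mul _ hM.det_pos.ne'.isUnit, one_mulVec]

lemma aux_quad_expand {A : Matrix (Fin n) (Fin n) ℝ} (hA : A.PosDef) (w c : Fin n → ℝ) :
    (A *ᵥ w + c) ⬝ᵥ (A⁻¹ *ᵥ (A *ᵥ w + c)) =
      (A *ᵥ w) ⬝ᵥ w + 2 * (c ⬝ᵥ w) + c ⬝ᵥ (A⁻¹ *ᵥ c) := by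
  have e1 : A⁻¹ *ᵥ (A *ᵥ w) = w := aux_inv_mulVec hA w
  have e3 : (A *ᵥ w) ⬝ᵥ (A⁻¹ *ᵥ c) = c ⬝ᵥ w := by
    rw [aux_dot_symm _ hA.inv.isHermitian, e1]
  simp only [mulVec_add, e1, dotProduct_add, add_dotProduct, e3]
  ring

/-- Infimal-convolution inequality for quadratic forms:
`(x+y)ᵀ (A+B)⁻¹ (x+y) ≤ xᵀ A⁻¹ x + yᵀ B⁻¹ y`. -/
lemma aux_infconv {A B : Matrix (Fin n) (Fin n) ℝ} (hA : A.PosDef) (hB : B.PosDef)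
    (x y : Fin n → ℝ) :
    (x + y) ⬝ᵥ ((A + B)⁻¹ *ᵥ (x + y)) ≤ x ⬝ᵥ (A⁻¹ *ᵥ x) + y ⬝ᵥ (B⁻¹ *ᵥ y) := by
  have hS : (A + B).PosDef := hA.add hB
  set w : Fin n → ℝ := (A + B)⁻¹ *ᵥ (x + y) with hw
  have hSw : (A + B) *ᵥ w = x + y := by
    rw [hw, mulVec_mulVec, Matrix.mul_nonsing_inv _ hS.det_pos.ne'.isUnit, one_mulVec]
  set c : Fin n → ℝ := x - A *ᵥ w with hc
  have hx : x = A *ᵥ w + c := by rw [hc]; abel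
  have hy : y = B *ᵥ w + (-c) := by
    have h := hSw
    rw [add_mulVec] at h
    rw [hc]
    have : A *ᵥ w + B *ᵥ w = x + y := h
    have := congrArg (fun v => v - x) this
    rw [show x + y - x = y by abel] at this
    rw [← this]; abel
  have h1 : x ⬝ᵥ (A⁻¹ *ᵥ x) = (A *ᵥ w) ⬝ᵥ w + 2 * (c ⬝ᵥ w) + c ⬝ᵥ (A⁻¹ *ᵥ c) := by
    conv_lhs => rw [hx]
    exact aux_quad_expand hA w c
  have h2 : y ⬝ᵥ (B⁻¹ *ᵥ y) = (B *ᵥ w) ⬝ᵥ w - 2 * (c ⬝ᵥ w) + c ⬝ᵥ (B⁻¹ *ᵥ c) := by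
    conv_lhs => rw [hy]
    rw [aux_quad_expand hB w (-c)]
    simp [neg_dotProduct, mulVec_neg, dotProduct_neg]
    ring
  have h3 : (x + y) ⬝ᵥ ((A + B)⁻¹ *ᵥ (x + y)) = (A *ᵥ w) ⬝ᵥ w + (B *ᵥ w) ⬝ᵥ w := by
    rw [← hw]
    conv_lhs => rw [← hSw]
    rw [add_mulVec, add_dotProduct]
  have n1 : 0 ≤ c ⬝ᵥ (A⁻¹ *ᵥ c) := aux_dot_nonneg hA.inv c
  have n2 : 0 ≤ c ⬝ᵥ (B⁻¹ *ᵥ c) := aux_dot_nonneg hB.inv c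
  rw [h1, h2, h3]
  linarith

lemma aux_smul_posDef {M : Matrix (Fin n) (Fin n) ℝ} (hM : M.PosDef) {r : ℝ} (hr : 0 < r) :
    (r • M).PosDef := by
  refine Matrix.PosDef.of_dotProduct_mulVec_pos ?_ fun x hx => ?_
  · rw [Matrix.IsHermitian, conjTranspose_smul, hM.1.eq, star_trivial]
  · rw [smul_mulVec, dotProduct_smul, smul_eq_mul]
    exact mul_pos hr (hM.dotProduct_mulVec_pos hx)

lemma aux_trace_pos (hn : 1 ≤ n) {M : Matrix (Fin n) (Fin n) ℝ} (hM : M.PosDef) :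
    0 < M.trace := by
  have : Nonempty (Fin n) := ⟨⟨0, hn⟩⟩
  rw [Matrix.trace]
  apply Finset.sum_pos
  · intro i _
    have hne : (Pi.single i 1 : Fin n → ℝ) ≠ 0 := by
      intro h
      have := congrFun h i
      simp at this
    have := hM.dotProduct_mulVec_pos hne
    simpa [Matrix.diag, mulVec, dotProduct, Pi.single_apply, Finset.sum_ite_eq,
      star_trivial] using this
  · exact Finset.univ_nonempty

end Aux

/-- The Gaussian probability of the Minkowski sum of the two ellipsoids is at most the
Gaussian probability of the outer ellipsoid `Q_c = (1+α) Q_x + (1+1/α) Q_o` with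
`α = tr(Q_o)/tr(Q_x)`. -/
theorem gaussian_prob_minkowski_le_outer {n : ℕ} (hn : 1 ≤ n)
    (Qx Qo : Matrix (Fin n) (Fin n) ℝ) (hQx : Qx.PosDef) (hQo : Qo.PosDef)
    (α : ℝ) (hα : α = Qo.trace / Qx.trace)
    (Qc : Matrix (Fin n) (Fin n) ℝ) (hQc : Qc = (1 + α) • Qx + (1 + 1 / α) • Qo)
    (m : Fin n → ℝ) (Sg : Matrix (Fin n) (Fin n) ℝ) (hSg : Sg.PosDef) :
    gaussianMeasure m Sg
        ({x | x ⬝ᵥ (Qx⁻¹ *ᵥ x) ≤ 1} + {y | y ⬝ᵥ (Qo⁻¹ *ᵥ y) ≤ 1}) ≤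
      gaussianMeasure m Sg {z | z ⬝ᵥ (Qc⁻¹ *ᵥ z) ≤ 1} := by
  have hα0 : 0 < α := by
    rw [hα]
    exact div_pos (aux_trace_pos hn hQo) (aux_trace_pos hn hQx)
  have ha : (0:ℝ) < 1 + α := by linarith
  have hb : (0:ℝ) < 1 + 1 / α := by positivity
  set A := (1 + α) • Qx with hA
  set B := (1 + 1 / α) • Qo with hB
  have hApd : A.PosDef := aux_smul_posDef hQx ha
  have hBpd : B.PosDef := aux_smul_posDef hQo hb
  have hAinv : A⁻¹ = (1 + α)⁻¹ • Qx⁻¹ := by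
    rw [hA]
    apply Matrix.inv_eq_left_inv
    rw [Matrix.smul_mul, Matrix.mul_smul, smul_smul, inv_mul_cancel₀ ha.ne',
      Matrix.nonsing_inv_mul _ hQx.det_pos.ne'.isUnit, one_smul]
  have hBinv : B⁻¹ = (1 + 1 / α)⁻¹ • Qo⁻¹ := by
    rw [hB]
    apply Matrix.inv_eq_left_inv
    rw [Matrix.smul_mul, Matrix.mul_smul, smul_smul, inv_mul_cancel₀ hb.ne',
      Matrix.nonsing_inv_mul _ hQo.det_pos.ne'.isUnit, one_smul]
  apply measure_mono
  rintro z hz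
  rw [Set.mem_add] at hz
  obtain ⟨x, hx, y, hy, rfl⟩ := hz
  simp only [Set.mem_setOf_eq] at hx hy ⊢
  have key : (x + y) ⬝ᵥ (Qc⁻¹ *ᵥ (x + y)) ≤ x ⬝ᵥ (A⁻¹ *ᵥ x) + y ⬝ᵥ (B⁻¹ *ᵥ y) := by
    rw [hQc]
    exact aux_infconv hApd hBpd x y
  have hxA : x ⬝ᵥ (A⁻¹ *ᵥ x) = (1 + α)⁻¹ * (x ⬝ᵥ (Qx⁻¹ *ᵥ x)) := by
    rw [hAinv, smul_mulVec, dotProduct_smul, smul_eq_mul]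
  have hyB : y ⬝ᵥ (B⁻¹ *ᵥ y) = (1 + 1 / α)⁻¹ * (y ⬝ᵥ (Qo⁻¹ *ᵥ y)) := by
    rw [hBinv, smul_mulVec, dotProduct_smul, smul_eq_mul]
  have hsum : (1 + α)⁻¹ + (1 + 1 / α)⁻¹ = 1 := by
    field_simp
    ring
  calc (x + y) ⬝ᵥ (Qc⁻¹ *ᵥ (x + y)) ≤ x ⬝ᵥ (A⁻¹ *ᵥ x) + y ⬝ᵥ (B⁻¹ *ᵥ y) := key
    _ = (1 + α)⁻¹ * (x ⬝ᵥ (Qx⁻¹ *ᵥ x)) + (1 + 1 / α)⁻¹ * (y ⬝ᵥ (Qo⁻¹ *ᵥ y)) := by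
        rw [hxA, hyB]
    _ ≤ (1 + α)⁻¹ * 1 + (1 + 1 / α)⁻¹ * 1 := by
        gcongr <;> positivity
    _ = 1 := by rw [mul_one, mul_one, hsum]
end

section
/- Let n ≥ 1 and let Hₙ denote the degree-n physicists' Hermite polynomial, defined by Hₙ(z) = (−1)ⁿ e^{z²} (dⁿ/dzⁿ) e^{−z²}. Let z₁,…,zₙ be the n (real, distinct) roots of Hₙ, and define weights wⱼ = 2^{n−1} n! √π / (n² · H_{n−1}(zⱼ)²) for j = 1,…,n. Then for every real polynomial h of degree at most 2n − 1, ∫_{−∞}^{∞} e^{−z²} h(z) dz = Σ_{j=1}^{n} wⱼ h(zⱼ). -/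
open Polynomial Real

/-- The physicists' Hermite polynomials, defined by the standard recurrence
`H₀ = 1`, `H₁ = 2X`, `H_{n+2} = 2X·H_{n+1} − 2(n+1)·H_n`
(equivalently `Hₙ(z) = (−1)ⁿ e^{z²} (dⁿ/dzⁿ) e^{−z²}`). -/
noncomputable def physHermite : ℕ → Polynomial ℝ
  | 0 => 1
  | 1 => C 2 * X
  | (n + 2) => C 2 * X * physHermite (n + 1) - C (2 * ((n : ℝ) + 1)) * physHermite n

lemma pH_deriv : ∀ n : ℕ, derivative (physHermite (n + 1)) = C (2 * ((n : ℝ) + 1)) * physHermite n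
  | 0 => by simp [physHermite]
  | 1 => by
    have h : physHermite 2 = C 2 * X * physHermite 1 - C (2 * (((0:ℕ) : ℝ) + 1)) * physHermite 0 := rfl
    rw [h]
    simp only [derivative_sub, derivative_mul, derivative_C, derivative_X]
    simp [physHermite]
    ring
  | (n + 2) => by
    have h1 := pH_deriv n
    have h2 := pH_deriv (n + 1)
    have h3 : physHermite (n + 3) = C 2 * X * physHermite (n + 2) - C (2 * (((n+1) : ℕ) + 1 : ℝ)) * physHermite (n + 1) := rfl
    have hrec : physHermite (n + 2) = C 2 * X * physHermite (n + 1) - C (2 * ((n : ℝ) + 1)) * physHermite n := rfl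
    rw [h3]
    simp only [derivative_sub, derivative_mul, derivative_C, derivative_X, zero_mul, zero_add,
      mul_one, h1, h2]
    rw [hrec]
    simp only [map_mul, map_add, map_ofNat, map_natCast, map_one]
    push_cast
    ring

lemma pH_succ (n : ℕ) : physHermite (n + 1) = C 2 * X * physHermite n - derivative (physHermite n) := by
  cases n with
  | zero => simp [physHermite]
  | succ m =>
    rw [pH_deriv m]
    show physHermite (m + 2) = _
    rw [physHermite]

lemma pH_natDegree_le : ∀ n : ℕ, (physHermite n).natDegree ≤ n
  | 0 => by simp [physHermite]
  | 1 => by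
    simp only [physHermite]
    exact (natDegree_C_mul_le _ _).trans (by simp)
  | (n + 2) => by
    have h1 := pH_natDegree_le n
    have h2 := pH_natDegree_le (n + 1)
    show (C 2 * X * physHermite (n+1) - C (2 * ((n : ℝ) + 1)) * physHermite n).natDegree ≤ n + 2
    refine (natDegree_sub_le _ _).trans (max_le ?_ ?_)
    · refine (natDegree_mul_le).trans ?_
      have : (C (2:ℝ) * X).natDegree ≤ 1 := (natDegree_C_mul_le _ _).trans (by simp)
      omega
    · refine (natDegree_C_mul_le _ _).trans (by omega)

lemma pH_coeff_self : ∀ n : ℕ, (physHermite n).coeff n = 2 ^ n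
  | 0 => by simp [physHermite]
  | 1 => by simp [physHermite]
  | (n + 2) => by
    have h2 := pH_coeff_self (n + 1)
    show (C 2 * X * physHermite (n+1) - C (2 * ((n : ℝ) + 1)) * physHermite n).coeff (n+2) = _
    rw [coeff_sub, mul_assoc, coeff_C_mul, coeff_X_mul, h2, coeff_C_mul,
      coeff_eq_zero_of_natDegree_lt ((pH_natDegree_le n).trans_lt (by omega))]
    ring

lemma pH_natDegree (n : ℕ) : (physHermite n).natDegree = n :=
  le_antisymm (pH_natDegree_le n)
    (le_natDegree_of_ne_zero (by rw [pH_coeff_self]; positivity))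

lemma pH_ne_zero (n : ℕ) : physHermite n ≠ 0 := fun h => by
  have := pH_coeff_self n
  rw [h] at this
  simp at this
  exact absurd this (by positivity)

lemma iterDeriv_of_natDegree_le (p : ℝ[X]) (k : ℕ) (h : p.natDegree ≤ k) :
    derivative^[k] p = C (k.factorial * p.coeff k) := by
  have h0 : (derivative^[k] p).natDegree ≤ 0 :=
    (natDegree_iterate_derivative p k).trans (by omega)
  rw [Polynomial.eq_C_of_natDegree_le_zero h0, coeff_iterate_derivative]
  simp [Nat.descFactorial_self, nsmul_eq_mul]

lemma pH_no_common_root : ∀ (n : ℕ) (x : ℝ),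
    (physHermite (n + 1)).eval x = 0 → (physHermite n).eval x ≠ 0
  | 0, x => by simp [physHermite]
  | (n + 1), x => by
    intro h hne
    apply pH_no_common_root n x hne
    have hrec : physHermite (n + 2) = C 2 * X * physHermite (n + 1) - C (2 * ((n : ℝ) + 1)) * physHermite n := rfl
    rw [hrec] at h
    simp only [eval_sub, eval_mul, eval_C, eval_X, hne, mul_zero, zero_sub, neg_eq_zero] at h
    have hc : (2 * ((n : ℝ) + 1)) ≠ 0 := by positivity
    exact (mul_eq_zero.mp h).resolve_left hc


lemma abs_pow_le_gauss_bound (t : ℝ) (k : ℕ) : |t| ^ k ≤ 1 + (t ^ 2) ^ k := by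
  rcases le_or_gt |t| 1 with h | h
  · have : |t| ^ k ≤ 1 := pow_le_one₀ (abs_nonneg t) h
    nlinarith [pow_nonneg (sq_nonneg t) k]
  · have h1 : |t| ^ k ≤ (|t| ^ 2) ^ k := by
      refine pow_le_pow_left₀ (abs_nonneg t) ?_ k
      nlinarith
    rw [sq_abs] at h1
    nlinarith

open MeasureTheory Filter Topology in
lemma integrable_monomial_gauss (k : ℕ) :
    Integrable (fun t : ℝ => t ^ k * Real.exp (-t ^ 2)) := by
  have h2k : Integrable (fun t : ℝ => (t ^ 2) ^ k * Real.exp (-t ^ 2)) := by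
    have h := integrable_rpow_mul_exp_neg_mul_sq (b := 1) one_pos
      (s := ((2 * k : ℕ) : ℝ)) (lt_of_lt_of_le (by norm_num) (Nat.cast_nonneg _))
    simp only [Real.rpow_natCast, neg_mul, one_mul] at h
    refine h.congr ?_
    filter_upwards with t
    rw [pow_mul]
  have h0 : Integrable (fun t : ℝ => Real.exp (-t ^ 2)) := by
    have := integrable_exp_neg_mul_sq (b := 1) one_pos
    simpa using this
  refine Integrable.mono' (h0.add h2k) ?_ ?_
  · exact (Continuous.mul (continuous_pow k) (by continuity)).aestronglyMeasurable
  · filter_upwards with t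
    simp only [Pi.add_apply]
    rw [Real.norm_eq_abs, abs_mul, abs_pow, abs_of_pos (Real.exp_pos _)]
    calc |t| ^ k * Real.exp (-t ^ 2) ≤ (1 + (t^2)^k) * Real.exp (-t^2) :=
          mul_le_mul_of_nonneg_right (abs_pow_le_gauss_bound t k) (Real.exp_pos _).le
      _ = Real.exp (-t^2) + (t^2)^k * Real.exp (-t^2) := by ring

open MeasureTheory in
lemma integrable_gauss_poly (p : ℝ[X]) :
    Integrable (fun t : ℝ => Real.exp (-t ^ 2) * p.eval t) := by
  have : (fun t : ℝ => Real.exp (-t ^ 2) * p.eval t) =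
      fun t => ∑ k ∈ Finset.range (p.natDegree + 1), p.coeff k * (t ^ k * Real.exp (-t ^ 2)) := by
    funext t
    rw [Polynomial.eval_eq_sum_range, Finset.mul_sum]
    congr 1; funext k; ring
  rw [this]
  exact integrable_finset_sum _ (fun k _ => (integrable_monomial_gauss k).const_mul _)

open Filter Topology in
lemma tendsto_gauss_poly (p : ℝ[X]) {l : Filter ℝ} (hl : Tendsto (fun t : ℝ => t ^ 2) l atTop) :
    Tendsto (fun t : ℝ => Real.exp (-t ^ 2) * p.eval t) l (nhds 0) := by
  have hfun : (fun t : ℝ => Real.exp (-t ^ 2) * p.eval t) =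
      fun t => ∑ k ∈ Finset.range (p.natDegree + 1), p.coeff k * (t ^ k * Real.exp (-t ^ 2)) := by
    funext t
    rw [Polynomial.eval_eq_sum_range, Finset.mul_sum]
    congr 1; funext k; ring
  rw [hfun]
  have h0 : (0:ℝ) = ∑ k ∈ Finset.range (p.natDegree + 1), p.coeff k * 0 := by simp
  rw [h0]
  refine tendsto_finset_sum _ (fun k _ => Tendsto.const_mul _ ?_)
  have hg : Tendsto (fun u : ℝ => Real.exp (-u) + u ^ k * Real.exp (-u)) atTop (nhds 0) := by
    have h1 : Tendsto (fun u : ℝ => Real.exp (-u)) atTop (nhds 0) := by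
      simpa using Real.tendsto_exp_comp_nhds_zero.mpr tendsto_neg_atTop_atBot
    simpa using h1.add (tendsto_pow_mul_exp_neg_atTop_nhds_zero k)
  have hg2 : Tendsto (fun t : ℝ => Real.exp (-t^2) + (t^2)^k * Real.exp (-t^2)) l (nhds 0) := by
    have := hg.comp hl
    simpa [Function.comp_def] using this
  refine squeeze_zero_norm (fun t => ?_) hg2
  rw [Real.norm_eq_abs, abs_mul, abs_pow, abs_of_pos (Real.exp_pos _)]
  calc |t| ^ k * Real.exp (-t ^ 2) ≤ (1 + (t^2)^k) * Real.exp (-t^2) :=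
        mul_le_mul_of_nonneg_right (abs_pow_le_gauss_bound t k) (Real.exp_pos _).le
    _ = Real.exp (-t^2) + (t^2)^k * Real.exp (-t^2) := by ring

noncomputable def GI (p : ℝ[X]) : ℝ := ∫ t : ℝ, Real.exp (-t ^ 2) * p.eval t

open MeasureTheory in
lemma GI_add (p q : ℝ[X]) : GI (p + q) = GI p + GI q := by
  unfold GI
  rw [← integral_add (integrable_gauss_poly p) (integrable_gauss_poly q)]
  congr 1; funext t; simp [mul_add]

open MeasureTheory in
lemma GI_Cmul (c : ℝ) (p : ℝ[X]) : GI (C c * p) = c * GI p := by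
  unfold GI
  rw [← integral_const_mul]
  congr 1; funext t; simp; ring

lemma GI_sub (p q : ℝ[X]) : GI (p - q) = GI p - GI q := by
  have h := GI_add (p - q) q
  simp only [sub_add_cancel] at h
  linarith

lemma GI_zero : GI 0 = 0 := by
  have := GI_Cmul 0 0
  simpa using this

open MeasureTheory in
lemma GI_C (c : ℝ) : GI (C c) = c * Real.sqrt π := by
  have h1 : GI (C c) = c * GI 1 := by
    simpa using GI_Cmul c 1
  rw [h1]
  have : GI 1 = Real.sqrt π := by
    unfold GI
    simp only [Polynomial.eval_one, mul_one]
    have := integral_gaussian 1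
    simpa using this
  rw [this]

open MeasureTheory in
lemma GI_sum {ι : Type*} (s : Finset ι) (f : ι → ℝ[X]) :
    GI (∑ i ∈ s, f i) = ∑ i ∈ s, GI (f i) := by
  classical
  induction s using Finset.induction_on with
  | empty => simpa using GI_zero
  | insert a s' hx ih =>
                    rw [Finset.sum_insert hx, GI_add, ih, Finset.sum_insert hx]

open MeasureTheory Filter Topology in
lemma integral_deriv_zero {F f : ℝ → ℝ} (hF : ∀ x, HasDerivAt F (f x) x)
    (hf : Integrable f) (h1 : Tendsto F atTop (nhds 0)) (h2 : Tendsto F atBot (nhds 0)) :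
    ∫ x : ℝ, f x = 0 := by
  have A : Tendsto (fun R : ℝ => ∫ x in (-R)..R, f x) atTop (nhds (∫ x, f x)) :=
    intervalIntegral_tendsto_integral hf tendsto_neg_atTop_atBot tendsto_id
  have B : ∀ R : ℝ, ∫ x in (-R)..R, f x = F R - F (-R) := fun R =>
    intervalIntegral.integral_eq_sub_of_hasDerivAt (fun x _ => hF x)
      hf.intervalIntegrable
  have C : Tendsto (fun R : ℝ => F R - F (-R)) atTop (nhds 0) := by
    have := h1.sub (h2.comp tendsto_neg_atTop_atBot)
    simpa using this
  have : Tendsto (fun R : ℝ => ∫ x in (-R)..R, f x) atTop (nhds 0) := by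
    simp only [B]; exact C
  exact tendsto_nhds_unique A this

set_option maxHeartbeats 1000000 in
open MeasureTheory Filter Topology in
lemma GI_ibp (p : ℝ[X]) : GI (derivative p - C 2 * X * p) = 0 := by
  unfold GI
  apply integral_deriv_zero (F := fun t : ℝ => Real.exp (-t ^ 2) * p.eval t)
  · intro x
    have hexp : HasDerivAt (fun t : ℝ => Real.exp (-t ^ 2)) (Real.exp (-x ^ 2) * (-(2*x))) x := by
      have h1 : HasDerivAt (fun t : ℝ => -t ^ 2) (-(2 * x)) x := by
        have := (hasDerivAt_pow 2 x).neg
        simpa [mul_comm, Pi.neg_def] using this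
      exact h1.exp
    have hp : HasDerivAt (fun t : ℝ => p.eval t) ((derivative p).eval x) x :=
      p.hasDerivAt x
    have := hexp.fun_mul hp
    refine this.congr_deriv ?_
    simp only [Polynomial.eval_sub, Polynomial.eval_mul, Polynomial.eval_C, Polynomial.eval_X]
    ring
  · exact integrable_gauss_poly _
  · exact tendsto_gauss_poly _ (by exact tendsto_pow_atTop (by norm_num))
  · refine tendsto_gauss_poly _ ?_
    have h := (tendsto_pow_atTop (α := ℝ) (n := 2) (by norm_num)).comp tendsto_neg_atBot_atTop
    have heq : ((fun x : ℝ => x ^ 2) ∘ fun t : ℝ => -t) = fun t : ℝ => t ^ 2 := by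
      funext t; simp [Function.comp, neg_pow]
    rwa [heq] at h

lemma GI_key : ∀ (n : ℕ) (p : ℝ[X]), GI (physHermite n * p) = GI (derivative^[n] p)
  | 0, p => by simp [physHermite]
  | (n + 1), p => by
    have ih := GI_key n (derivative p)
    have e : physHermite (n + 1) * p =
        physHermite n * derivative p -
          (derivative (physHermite n * p) - C 2 * X * (physHermite n * p)) := by
      rw [pH_succ, derivative_mul]; ring
    rw [e, GI_sub, GI_ibp, sub_zero, ih, Function.iterate_succ_apply]

lemma GI_orth {n : ℕ} {p : ℝ[X]} (h : p.natDegree < n) : GI (physHermite n * p) = 0 := by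
  rw [GI_key, Polynomial.iterate_derivative_eq_zero h, GI_zero]

lemma GI_pairing {n : ℕ} {p : ℝ[X]} (h : p.natDegree ≤ n) :
    GI (physHermite n * p) = n.factorial * p.coeff n * Real.sqrt π := by
  rw [GI_key, iterDeriv_of_natDegree_le _ _ h, GI_C]

/-- Gauss–Hermite quadrature: with nodes the `n` distinct real roots of `Hₙ` and weights
`wⱼ = 2^{n−1} n! √π / (n² H_{n−1}(zⱼ)²)`, the quadrature rule is exact for every
polynomial of degree at most `2n − 1`. -/
theorem gauss_hermite_quadrature {n : ℕ} (hn : 1 ≤ n)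
    (z : Fin n → ℝ) (hz_inj : Function.Injective z)
    (hz_root : ∀ j, (physHermite n).eval (z j) = 0)
    (w : Fin n → ℝ)
    (hw : ∀ j, w j = 2 ^ (n - 1) * (n.factorial : ℝ) * Real.sqrt π /
      ((n : ℝ) ^ 2 * ((physHermite (n - 1)).eval (z j)) ^ 2)) :
    ∀ h : Polynomial ℝ, h.natDegree ≤ 2 * n - 1 →
      ∫ t : ℝ, Real.exp (-t ^ 2) * h.eval t = ∑ j, w j * h.eval (z j) := by
  obtain ⟨m, rfl⟩ : ∃ m, n = m + 1 := ⟨n - 1, by omega⟩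
  intro h hdeg
  have hdeg' : h.natDegree ≤ 2 * m + 1 := by omega
  set H : ℝ[X] := physHermite (m + 1) with hH
  -- the monic node polynomial
  set M : ℝ[X] := ∏ j : Fin (m + 1), (X - C (z j)) with hMdef
  have hM_monic : M.Monic := monic_prod_of_monic _ _ (fun j _ => monic_X_sub_C _)
  have hM_deg : M.natDegree = m + 1 := by
    rw [hMdef, natDegree_prod _ _ (fun j _ => X_sub_C_ne_zero (z j))]
    simp [natDegree_X_sub_C]
  have hMeval : ∀ j, M.eval (z j) = 0 := by
    intro j
    rw [hMdef, eval_prod]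
    exact Finset.prod_eq_zero (Finset.mem_univ j) (by simp)
  -- H = 2^{m+1} M
  have hc_ne : ((2:ℝ) ^ (m+1)) ≠ 0 := by positivity
  have hHM : H = C (2 ^ (m + 1)) * M := by
    by_contra hne
    have hP_ne : H - C (2 ^ (m + 1)) * M ≠ 0 := sub_ne_zero.mpr hne
    have hdegH : H.degree = ((m + 1 : ℕ) : WithBot ℕ) := by
      rw [degree_eq_natDegree (pH_ne_zero _), pH_natDegree]
    have hdegCM : (C ((2:ℝ) ^ (m + 1)) * M).degree = ((m + 1 : ℕ) : WithBot ℕ) := by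
      rw [degree_C_mul hc_ne, degree_eq_natDegree hM_monic.ne_zero, hM_deg]
    have hlc : H.leadingCoeff = (C ((2:ℝ) ^ (m + 1)) * M).leadingCoeff := by
      rw [leadingCoeff_mul, leadingCoeff_C, hM_monic.leadingCoeff, mul_one,
        Polynomial.leadingCoeff, pH_natDegree, pH_coeff_self]
    have hdlt : (H - C (2 ^ (m + 1)) * M).degree < H.degree :=
      degree_sub_lt (hdegH.trans hdegCM.symm) (pH_ne_zero _) hlc
    have hndlt : (H - C (2 ^ (m + 1)) * M).natDegree < m + 1 := by
      have := (natDegree_lt_iff_degree_lt hP_ne).mpr (hdlt.trans_le (le_of_eq hdegH))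
      exact_mod_cast this
    have := eq_zero_of_natDegree_lt_card_of_eval_eq_zero (H - C (2 ^ (m + 1)) * M) hz_inj
      (fun j => by simpa [eval_sub, hMeval j, hH] using hz_root j) (by simpa using hndlt)
    exact hP_ne this
  -- per-node objects
  set Mj : Fin (m+1) → ℝ[X] := fun j => ∏ i ∈ Finset.univ.erase j, (X - C (z i)) with hMjdef
  have hMfac : ∀ j, M = (X - C (z j)) * Mj j := fun j =>
    (Finset.mul_prod_erase _ _ (Finset.mem_univ j)).symm
  have hMj_monic : ∀ j, (Mj j).Monic := fun j =>
    monic_prod_of_monic _ _ (fun i _ => monic_X_sub_C _)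
  have hMj_deg : ∀ j, (Mj j).natDegree = m := by
    intro j
    rw [hMjdef, natDegree_prod _ _ (fun i _ => X_sub_C_ne_zero (z i))]
    simp [natDegree_X_sub_C, Finset.card_erase_of_mem]
  set d : Fin (m+1) → ℝ := fun j => (Mj j).eval (z j) with hddef
  have hd_ne : ∀ j, d j ≠ 0 := by
    intro j
    rw [hddef]
    simp only [hMjdef, eval_prod, eval_sub, eval_X, eval_C]
    rw [Finset.prod_ne_zero_iff]
    intro i hi
    exact sub_ne_zero.mpr (fun hzz => (Finset.mem_erase.mp hi).1 (hz_inj hzz.symm))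
  set v : Fin (m+1) → ℝ := fun j => (physHermite m).eval (z j) with hvdef
  have hv_ne : ∀ j, v j ≠ 0 := fun j => pH_no_common_root m (z j) (hz_root j)
  -- derivative relation : 2^{m+1} d j = 2(m+1) v j
  have hder : ∀ j, 2 ^ (m+1) * d j = 2 * ((m:ℝ) + 1) * v j := by
    intro j
    have h1 : derivative H = C (2 * ((m:ℝ) + 1)) * physHermite m := pH_deriv m
    have h2 : derivative H = C (2 ^ (m+1)) * (Mj j + (X - C (z j)) * derivative (Mj j)) := by
      rw [hHM, hMfac j, derivative_C_mul, derivative_mul, derivative_sub, derivative_X,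
        derivative_C]
      ring
    have := congrArg (fun p : ℝ[X] => p.eval (z j)) h2
    rw [h1] at this
    simp only [eval_mul, eval_C, eval_add, eval_sub, eval_X, sub_self, zero_mul, add_zero] at this
    rw [hvdef, hddef]
    linarith [this]
  -- the weight integral : GI (Mj j) = m! √π / v j
  have hGIMj : ∀ j, v j * GI (Mj j) = m.factorial * Real.sqrt π := by
    intro j
    have hpair : GI (physHermite m * Mj j) = m.factorial * Real.sqrt π := by
      rw [GI_pairing (le_of_eq (hMj_deg j))]
      have : (Mj j).coeff m = 1 := by
        have := (hMj_monic j).leadingCoeff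
        rwa [Polynomial.leadingCoeff, hMj_deg j] at this
      rw [this, mul_one]
    obtain ⟨s, hs⟩ : ∃ s, physHermite m - C (v j) = (X - C (z j)) * s := by
      obtain ⟨s, hs⟩ := X_sub_C_dvd_sub_C_eval (a := z j) (p := physHermite m)
      exact ⟨s, hs⟩
    have hsdeg : s.natDegree < m + 1 := by
      rcases eq_or_ne s 0 with h0 | h0
      · simp [h0]
      · have h1 : ((X - C (z j)) * s).natDegree = 1 + s.natDegree := by
          rw [natDegree_mul (X_sub_C_ne_zero (z j)) h0, natDegree_X_sub_C]
        have h2 : (physHermite m - C (v j)).natDegree ≤ m := by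
          refine (natDegree_sub_le _ _).trans (max_le ?_ ?_)
          · exact le_of_eq (pH_natDegree m)
          · simp
        rw [hs, h1] at h2
        omega
    have hsplit : physHermite m * Mj j =
        H * (C ((2:ℝ)^(m+1))⁻¹ * s) + C (v j) * Mj j := by
      have hM2 : (X - C (z j)) * Mj j = C ((2:ℝ)^(m+1))⁻¹ * H := by
        rw [hHM, ← hMfac j, ← mul_assoc, ← C_mul, inv_mul_cancel₀ hc_ne, C_1, one_mul]
      calc physHermite m * Mj j = (physHermite m - C (v j)) * Mj j + C (v j) * Mj j := by ring
        _ = (X - C (z j)) * s * Mj j + C (v j) * Mj j := by rw [hs]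
        _ = s * ((X - C (z j)) * Mj j) + C (v j) * Mj j := by ring
        _ = s * (C ((2:ℝ)^(m+1))⁻¹ * H) + C (v j) * Mj j := by rw [hM2]
        _ = H * (C ((2:ℝ)^(m+1))⁻¹ * s) + C (v j) * Mj j := by ring
    have horth : GI (H * (C ((2:ℝ)^(m+1))⁻¹ * s)) = 0 :=
      GI_orth ((natDegree_C_mul_le _ _).trans_lt hsdeg)
    rw [hsplit, GI_add, horth, zero_add, GI_Cmul] at hpair
    exact hpair
  -- division with remainder
  set r : ℝ[X] := h %ₘ M with hrdef
  set q : ℝ[X] := h /ₘ M with hqdef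
  have hsplit : r + M * q = h := modByMonic_add_div h M
  have hr_deg : r.natDegree < m + 1 := by
    rcases eq_or_ne r 0 with h0 | h0
    · simp [h0]
    · have h1 : r.degree < M.degree := degree_modByMonic_lt h hM_monic
      have h2 : M.degree = ((m + 1 : ℕ) : WithBot ℕ) := by
        rw [degree_eq_natDegree hM_monic.ne_zero, hM_deg]
      rw [h2] at h1
      exact_mod_cast (natDegree_lt_iff_degree_lt h0).mpr h1
  have hq_deg : q.natDegree ≤ m := by
    rw [hqdef, natDegree_divByMonic h hM_monic, hM_deg]
    omega
  -- the integral reduces to GI r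
  have hGIh : GI h = GI r := by
    rw [← hsplit, GI_add]
    have hMq : M * q = H * (C ((2:ℝ)^(m+1))⁻¹ * q) := by
      calc M * q = C ((2:ℝ)^(m+1) * ((2:ℝ)^(m+1))⁻¹) * (M * q) := by
            rw [mul_inv_cancel₀ hc_ne, C_1, one_mul]
        _ = (C ((2:ℝ)^(m+1)) * M) * (C ((2:ℝ)^(m+1))⁻¹ * q) := by rw [C_mul]; ring
        _ = H * (C ((2:ℝ)^(m+1))⁻¹ * q) := by rw [← hHM]
    have : GI (M * q) = 0 := by
      rw [hMq]
      exact GI_orth ((natDegree_C_mul_le _ _).trans_lt (by omega))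
    rw [this]
    ring
  -- interpolation of r
  have hinterp : r = ∑ j, C (r.eval (z j) / d j) * Mj j := by
    set P : ℝ[X] := r - ∑ j, C (r.eval (z j) / d j) * Mj j with hPdef
    have hPeval : ∀ i, P.eval (z i) = 0 := by
      intro i
      rw [hPdef]
      simp only [eval_sub, eval_finset_sum, eval_mul, eval_C]
      have hsum : ∀ j, j ≠ i → r.eval (z j) / d j * (Mj j).eval (z i) = 0 := by
        intro j hji
        have : (Mj j).eval (z i) = 0 := by
          rw [hMjdef]
          simp only [eval_prod]
          exact Finset.prod_eq_zero (Finset.mem_erase.mpr ⟨hji.symm, Finset.mem_univ i⟩) (by simp)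
        rw [this, mul_zero]
      rw [Finset.sum_eq_single i]
      · rw [div_mul_cancel₀ _ (hd_ne i)]
        ring
      · intro j _ hji
        exact hsum j hji
      · intro hcon
        exact absurd (Finset.mem_univ i) hcon
    have hPdeg : P.natDegree < m + 1 := by
      rw [hPdef]
      refine (natDegree_sub_le _ _).trans_lt (max_lt (by omega) ?_)
      have : (∑ j, C (r.eval (z j) / d j) * Mj j).natDegree ≤ m := by
        refine natDegree_sum_le_of_forall_le _ _ (fun j _ => ?_)
        exact (natDegree_C_mul_le _ _).trans (le_of_eq (hMj_deg j))
      omega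
    have := eq_zero_of_natDegree_lt_card_of_eval_eq_zero P hz_inj hPeval
      (by simpa using hPdeg)
    rw [hPdef] at this
    linear_combination (norm := module) this
  -- compute GI r
  have hGIr : GI r = ∑ j, r.eval (z j) / d j * (GI (Mj j)) := by
    conv_lhs => rw [hinterp, GI_sum]
    exact Finset.sum_congr rfl (fun j _ => GI_Cmul _ _)
  -- identify weights
  have hwj : ∀ j, r.eval (z j) / d j * GI (Mj j) = w j * r.eval (z j) := by
    intro j
    have hGIMj' : GI (Mj j) = m.factorial * Real.sqrt π / v j :=
      eq_div_of_mul_eq (hv_ne j) (by rw [mul_comm]; exact hGIMj j)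
    have hdval : d j = 2 * ((m:ℝ) + 1) * v j / 2 ^ (m+1) :=
      eq_div_of_mul_eq (by positivity) (by rw [mul_comm]; exact hder j)
    rw [hw j]
    simp only [Nat.add_sub_cancel]
    rw [hGIMj', hdval]
    have hfac : ((m+1).factorial : ℝ) = ((m:ℝ) + 1) * m.factorial := by
      rw [Nat.factorial_succ]; push_cast; ring
    have hcast : ((m + 1 : ℕ) : ℝ) = (m : ℝ) + 1 := by push_cast; ring
    rw [hcast, hfac]
    have hm1 : ((m:ℝ) + 1) ≠ 0 := by positivity
    have h2m : ((2:ℝ) ^ (m+1)) ≠ 0 := by positivity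
    rw [show (physHermite m).eval (z j) = v j from rfl]
    field_simp [hv_ne j, hm1]
    ring
  -- finish
  have hrh : ∀ j, r.eval (z j) = h.eval (z j) := by
    intro j
    conv_rhs => rw [← hsplit]
    simp [hMeval j]
  show GI h = _
  rw [hGIh, hGIr]
  refine Finset.sum_congr rfl (fun j _ => ?_)
  rw [hwj j, hrh j]
end
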